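/- Let f : {0,1}^n → {−1,1}, β_f(s) = 2^{-n} ∑_ε (−1)^{ε·s} f(ε), and let W_f = ∑_{s ∈ {0,1}^n} β_f(s) σ(θ_{s₁}^1) ⊗ ⋯ ⊗ σ(θ_{sₙ}^n) with σ(θ) = [[0, e^{-iθ}],[e^{iθ},0]] and arbitrary angles θ_s^j ∈ ℝ. Then the operator norm of W_f is at most 2^{n/2}. -/

import Mathlib

open Matrix Finset Complex
open scoped Matrix.Norms.L2Operator

/-- The sign `±1` encoded by a Boolean (`true ↦ 1`, `false ↦ −1`). -/
def sgn (b : Bool) : ℝ := if b then 1 else -1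

/-- `(-1)^{ε·s}` for binary vectors `ε s : Fin n → Bool`. -/
def signChar (n : ℕ) (ε s : Fin n → Bool) : ℝ :=
  ∏ j : Fin n, (if ε j ∧ s j then (-1 : ℝ) else 1)

/-- The Werner–Wolf Fourier coefficient `β_f(s) = 2⁻ⁿ ∑_ε (-1)^{ε·s} f(ε)`. -/
noncomputable def wwBeta (n : ℕ) (f : (Fin n → Bool) → ℝ) (s : Fin n → Bool) : ℝ :=
  (2 : ℝ)⁻¹ ^ n * ∑ ε : Fin n → Bool, signChar n ε s * f ε

/-- The coplanar spin matrix `σ(θ) = [[0, e^{−iθ}],[e^{iθ},0]]`, with rows/columns indexed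
by `Bool` (`true ↦ |1⟩`, `false ↦ |−1⟩`). -/
noncomputable def sigmaB (θ : ℝ) : Matrix Bool Bool ℂ :=
  Matrix.of fun x y => if x = !y then Complex.exp ((sgn y : ℂ) * θ * Complex.I) else 0

/-- The Werner–Wolf operator `W_f = ∑_s β_f(s) σ(θ_{s₁}¹) ⊗ ⋯ ⊗ σ(θ_{sₙ}ⁿ)`,
where the row index `s` ranges over `{0,1}ⁿ` (`s : Fin n → Bool`). -/
noncomputable def wwOp (n : ℕ) (f : (Fin n → Bool) → ℝ) (θ : Bool → Fin n → ℝ) :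
    Matrix (Fin n → Bool) (Fin n → Bool) ℂ :=
  ∑ s : Fin n → Bool,
    (wwBeta n f s : ℂ) •
      Matrix.of fun x y : Fin n → Bool => ∏ j : Fin n, sigmaB (θ (s j) j) (x j) (y j)

/-! ### Auxiliary lemmas -/

/-- A "monomial" matrix (at most one nonzero entry in each row, located along a
permutation) has L2 operator norm bounded by the maximal entry norm. -/
lemma monomial_norm_le {m : Type*} [Fintype m] [DecidableEq m]
    (A : Matrix m m ℂ) (e : Equiv.Perm m) (C : ℝ) (hC : 0 ≤ C)
    (h0 : ∀ x y, x ≠ e y → A x y = 0)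
    (h1 : ∀ y, ‖A (e y) y‖ ≤ C) : ‖A‖ ≤ C := by
  rw [Matrix.l2_opNorm_def]
  refine ContinuousLinearMap.opNorm_le_bound _ hC fun v => ?_
  set w := (Matrix.toEuclideanLin.trans LinearMap.toContinuousLinearMap A) v with hw
  have hwx : ∀ x, w x = A x (e.symm x) * v (e.symm x) := by
    intro x
    have : w x = (A *ᵥ (fun y => v y)) x := rfl
    rw [this, Matrix.mulVec, dotProduct]
    rw [Finset.sum_eq_single (e.symm x)]
    · intro b _ hb
      rw [h0 x b (fun h => hb (by rw [h, Equiv.symm_apply_apply])), zero_mul]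
    · simp
  have hsq : ‖w‖ ^ 2 ≤ (C * ‖v‖) ^ 2 := by
    rw [EuclideanSpace.norm_eq, Real.sq_sqrt (by positivity)]
    have : ∀ x, ‖w x‖ ^ 2 ≤ C ^ 2 * ‖v (e.symm x)‖ ^ 2 := by
      intro x
      rw [hwx, norm_mul, mul_pow]
      have h1' : ‖A x (e.symm x)‖ ≤ C := by
        simpa [Equiv.apply_symm_apply] using h1 (e.symm x)
      exact mul_le_mul_of_nonneg_right (pow_le_pow_left₀ (norm_nonneg _) h1' 2)
        (by positivity)
    calc ∑ x, ‖w x‖ ^ 2 ≤ ∑ x, C ^ 2 * ‖v (e.symm x)‖ ^ 2 :=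
          Finset.sum_le_sum fun x _ => this x
      _ = C ^ 2 * ∑ x, ‖v (e.symm x)‖ ^ 2 := by rw [Finset.mul_sum]
      _ = C ^ 2 * ∑ x, ‖v x‖ ^ 2 := by
          rw [Equiv.sum_comp e.symm (fun x => ‖v x‖ ^ 2)]
      _ = (C * ‖v‖) ^ 2 := by
          rw [EuclideanSpace.norm_eq, mul_pow, Real.sq_sqrt (by positivity)]
  have := Real.sqrt_le_sqrt hsq
  rwa [Real.sqrt_sq (norm_nonneg _), Real.sqrt_sq (by positivity)] at this

/-- Orthogonality of the characters `signChar`. -/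
lemma signChar_ortho (n : ℕ) (ε ε' : Fin n → Bool) :
    ∑ s : Fin n → Bool, signChar n ε s * signChar n ε' s
      = if ε = ε' then (2:ℝ)^n else 0 := by
  have h1 : ∀ s : Fin n → Bool, signChar n ε s * signChar n ε' s =
      ∏ j : Fin n, ((if ε j ∧ s j then (-1:ℝ) else 1) * (if ε' j ∧ s j then (-1:ℝ) else 1)) := by
    intro s; rw [signChar, signChar, ← Finset.prod_mul_distrib]
  simp_rw [h1]
  rw [← Fintype.prod_sum (fun (j : Fin n) (b : Bool) =>
    (if ε j = true ∧ b = true then (-1:ℝ) else 1) * (if ε' j = true ∧ b = true then (-1:ℝ) else 1))]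
  have h2 : ∀ j : Fin n, (∑ b : Bool, (if ε j = true ∧ b = true then (-1:ℝ) else 1) *
      (if ε' j = true ∧ b = true then (-1:ℝ) else 1)) = if ε j = ε' j then 2 else 0 := by
    intro j
    cases hε : ε j <;> cases hε' : ε' j <;> simp [Fintype.sum_bool] <;> norm_num
  simp_rw [h2]
  by_cases h : ε = ε'
  · subst h; simp [Finset.prod_const]
  · obtain ⟨j, hj⟩ := Function.ne_iff.mp h
    rw [Finset.prod_eq_zero (Finset.mem_univ j) (by simp [hj]), if_neg h]

/-- Parseval's identity: the Fourier coefficients of a `±1`-valued function have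
squared norm `1`. -/
lemma sum_beta_sq (n : ℕ) (f : (Fin n → Bool) → ℝ)
    (hf : ∀ ε, f ε = 1 ∨ f ε = -1) :
    ∑ s : Fin n → Bool, (wwBeta n f s) ^ 2 = 1 := by
  have key : ∀ s : Fin n → Bool, wwBeta n f s ^ 2 =
      ((2:ℝ)⁻¹ ^ n * (2:ℝ)⁻¹ ^ n) *
        ∑ ε : Fin n → Bool, ∑ ε' : Fin n → Bool,
          (f ε * f ε') * (signChar n ε s * signChar n ε' s) := by
    intro s
    rw [wwBeta, sq, mul_mul_mul_comm, Finset.sum_mul_sum]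
    congr 1
    refine Finset.sum_congr rfl fun ε _ => Finset.sum_congr rfl fun ε' _ => by ring
  simp_rw [key, ← Finset.mul_sum]
  rw [Finset.sum_comm]
  conv_lhs => rw [show (∑ ε : Fin n → Bool, ∑ s : Fin n → Bool, ∑ ε' : Fin n → Bool,
      (f ε * f ε') * (signChar n ε s * signChar n ε' s)) =
    ∑ ε : Fin n → Bool, ∑ ε' : Fin n → Bool,
      (f ε * f ε') * ∑ s : Fin n → Bool, signChar n ε s * signChar n ε' s by
    refine Finset.sum_congr rfl fun ε _ => ?_
    rw [Finset.sum_comm]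
    exact Finset.sum_congr rfl fun ε' _ => by rw [Finset.mul_sum]]
  simp_rw [signChar_ortho, mul_ite, mul_zero, Finset.sum_ite_eq, Finset.mem_univ, if_pos]
  have hfe : ∀ ε, f ε * f ε = 1 := fun ε => by rcases hf ε with h | h <;> rw [h] <;> norm_num
  simp_rw [hfe, one_mul, Finset.sum_const, Finset.card_univ]
  simp [Fintype.card_fun]
  have h2n : (2:ℝ) ^ n ≠ 0 := by positivity
  field_simp

/-- The `ℓ¹` norm of the Fourier coefficients is at most `2^{n/2}`. -/
lemma sum_abs_beta_le (n : ℕ) (f : (Fin n → Bool) → ℝ)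
    (hf : ∀ ε, f ε = 1 ∨ f ε = -1) :
    ∑ s : Fin n → Bool, |wwBeta n f s| ≤ (2:ℝ) ^ ((n : ℝ) / 2) := by
  have hcs : (∑ s : Fin n → Bool, |wwBeta n f s|) ^ 2 ≤
      ((Finset.univ : Finset (Fin n → Bool)).card : ℝ) * ∑ s : Fin n → Bool, |wwBeta n f s| ^ 2 := by
    have h := sq_sum_le_card_mul_sum_sq (ι := Fin n → Bool) (α := ℝ)
      (s := (Finset.univ : Finset (Fin n → Bool))) (f := fun s => |wwBeta n f s|)
    exact_mod_cast h
  have hsq : ∑ s : Fin n → Bool, |wwBeta n f s| ^ 2 = 1 := by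
    rw [Finset.sum_congr rfl fun s _ => _root_.sq_abs (wwBeta n f s)]
    exact sum_beta_sq n f hf
  have hcard : ((Finset.univ : Finset (Fin n → Bool)).card : ℝ) = (2:ℝ) ^ n := by
    rw [Finset.card_univ]; simp [Fintype.card_fun]
  rw [hsq, hcard, mul_one] at hcs
  have hrw : (2:ℝ) ^ ((n : ℝ) / 2) = Real.sqrt ((2:ℝ) ^ n) := by
    rw [Real.sqrt_eq_rpow, ← Real.rpow_natCast 2 n, ← Real.rpow_mul (by norm_num)]
    norm_num
    ring_nf
  rw [hrw]
  have := Real.sqrt_le_sqrt hcs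
  rwa [Real.sqrt_sq (Finset.sum_nonneg fun s _ => abs_nonneg _)] at this

/-- The componentwise flip, as a permutation of `Fin n → Bool`. -/
def flipPerm (n : ℕ) : Equiv.Perm (Fin n → Bool) :=
  Function.Involutive.toPerm (fun y j => !(y j)) (fun y => by funext j; simp)

/-- for `f : {0,1}ⁿ → {−1,1}` and arbitrary angles, `‖W_f‖ ≤ 2^{n/2}`. -/
theorem wwOp_norm_le (n : ℕ) (f : (Fin n → Bool) → ℝ)
    (hf : ∀ ε, f ε = 1 ∨ f ε = -1) (θ : Bool → Fin n → ℝ) :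
    ‖wwOp n f θ‖ ≤ (2 : ℝ) ^ ((n : ℝ) / 2) := by
  classical
  set C : ℝ := ∑ s : Fin n → Bool, |wwBeta n f s| with hC
  have hCnn : 0 ≤ C := Finset.sum_nonneg fun s _ => abs_nonneg _
  have happly : ∀ x y : Fin n → Bool, wwOp n f θ x y =
      ∑ s : Fin n → Bool, (wwBeta n f s : ℂ) *
        ∏ j : Fin n, sigmaB (θ (s j) j) (x j) (y j) := by
    intro x y
    rw [wwOp, Matrix.sum_apply]
    exact Finset.sum_congr rfl fun s _ => by simp [Matrix.smul_apply, smul_eq_mul]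
  refine le_trans (monomial_norm_le (wwOp n f θ) (flipPerm n) C hCnn ?_ ?_)
    (sum_abs_beta_le n f hf)
  · intro x y hxy
    rw [happly]
    refine Finset.sum_eq_zero fun s _ => ?_
    have : ∃ j, x j ≠ !(y j) := by
      by_contra h
      push_neg at h
      exact hxy (funext h)
    obtain ⟨j, hj⟩ := this
    rw [Finset.prod_eq_zero (Finset.mem_univ j) (by rw [sigmaB, Matrix.of_apply, if_neg hj]),
      mul_zero]
  · intro y
    rw [happly]
    refine le_trans (norm_sum_le _ _) ?_
    rw [hC]
    refine Finset.sum_le_sum fun s _ => ?_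
    rw [norm_mul]
    have hflip : ∀ j : Fin n, flipPerm n y j = !(y j) := fun j => rfl
    have hprod : ‖∏ j : Fin n, sigmaB (θ (s j) j) (flipPerm n y j) (y j)‖ = 1 := by
      rw [norm_prod]
      refine Finset.prod_eq_one fun j _ => ?_
      rw [sigmaB, Matrix.of_apply, if_pos (hflip j)]
      have : ((sgn (y j) : ℂ) * (θ (s j) j) * Complex.I)
          = ((sgn (y j) * θ (s j) j : ℝ) : ℂ) * Complex.I := by push_cast; ring
      rw [this, Complex.norm_exp_ofReal_mul_I]
    rw [hprod, mul_one, Complex.norm_real, Real.norm_eq_abs]
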